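/- Fix u ∈ (1/2, 1), let Δ = ⌈1/(1-u)⌉, c_i = 1/(u·i·(i-1)) for 2 ≤ i ≤ Δ-1, and c_Δ = 1 - (Δ-2)/(u(Δ-1)). Then for every x ∈ [0, u), 1/(1 - ∑_{i=2}^{Δ} c_i x^i) ≤ (1 - [x ≥ u/2]/(8(1+ln 2)Δ)) / ((1 - x/u)(1 - ln(1 - x/u))), where [P] is 1 if P holds and 0 otherwise. -/

import Mathlib

set_option maxHeartbeats 1000000

lemma aux_hasSum (y : ℝ) (h1 : |y| < 1) :
    HasSum (fun n : ℕ => y ^ (n + 2) / (((n : ℝ) + 2) * ((n : ℝ) + 1)))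
      (y + (1 - y) * Real.log (1 - y)) := by
  have L := Real.hasSum_pow_div_log_of_abs_lt_one h1
  have h1' := L.mul_left y
  have h2' : HasSum (fun n : ℕ => y ^ (n + 2) / ((n : ℝ) + 2)) (-Real.log (1 - y) - y) := by
    have hval : (-Real.log (1 - y) - y)
        + ∑ i ∈ Finset.range 1, y ^ (i + 1) / ((i : ℝ) + 1) = -Real.log (1 - y) := by
      simp
    have h := (hasSum_nat_add_iff (f := fun n : ℕ => y ^ (n + 1) / ((n : ℝ) + 1)) 1).mpr
      (by rw [hval]; exact L)
    convert h using 2 with n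
    · rfl
    · push_cast; ring
  have hfun : (fun n : ℕ => y ^ (n + 2) / (((n : ℝ) + 2) * ((n : ℝ) + 1)))
      = fun n : ℕ => y * (y ^ (n + 1) / ((n : ℝ) + 1)) - y ^ (n + 2) / ((n : ℝ) + 2) := by
    funext n
    have hn1 : ((n : ℝ) + 1) ≠ 0 := by positivity
    have hn2 : ((n : ℝ) + 2) ≠ 0 := by positivity
    field_simp
    ring
  have hval : y + (1 - y) * Real.log (1 - y)
      = y * (-Real.log (1 - y)) - (-Real.log (1 - y) - y) := by ring
  rw [hfun, hval]
  exact h1'.sub h2'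

lemma partial_sum_le (y : ℝ) (h0 : 0 ≤ y) (h1 : y < 1) (N : ℕ) :
    ∑ i ∈ Finset.Icc 2 N, y ^ i / ((i : ℝ) * ((i : ℝ) - 1)) ≤ y + (1 - y) * Real.log (1 - y) := by
  have habs : |y| < 1 := by rwa [abs_of_nonneg h0]
  have hs := aux_hasSum y habs
  have hre : ∑ i ∈ Finset.Icc 2 N, y ^ i / ((i : ℝ) * ((i : ℝ) - 1))
      = ∑ n ∈ Finset.range (N + 1 - 2), y ^ (n + 2) / (((n : ℝ) + 2) * ((n : ℝ) + 1)) := by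
    rw [← Finset.Ico_add_one_right_eq_Icc, Finset.sum_Ico_eq_sum_range]
    refine Finset.sum_congr rfl fun n _ => ?_
    rw [add_comm 2 n]
    push_cast
    ring_nf
  rw [hre]
  exact sum_le_hasSum _ (fun n _ => by positivity) hs



open Classical in
/-- Lemma relating the truncated series for `D_u` to the `u = 1` expression. -/
theorem partial_ub (u : ℝ) (hu1 : 1 / 2 < u) (hu2 : u < 1)
    (Δ : ℕ) (hΔ : Δ = ⌈1 / (1 - u)⌉₊)
    (c : ℕ → ℝ)
    (hc : ∀ i, 2 ≤ i → i ≤ Δ - 1 → c i = 1 / (u * i * ((i : ℝ) - 1)))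
    (hcΔ : c Δ = 1 - ((Δ : ℝ) - 2) / (u * ((Δ : ℝ) - 1)))
    (x : ℝ) (hx : x ∈ Set.Ico 0 u) :
    1 / (1 - ∑ i ∈ Finset.Icc 2 Δ, c i * x ^ i) ≤
      (1 - (if u / 2 ≤ x then (1 : ℝ) else 0) / (8 * (1 + Real.log 2) * Δ)) /
        ((1 - x / u) * (1 - Real.log (1 - x / u))) := by
  obtain ⟨hx0, hxu⟩ := hx
  have hu0 : (0:ℝ) < u := by linarith
  have h1u : (0:ℝ) < 1 - u := by linarith
  have hΔ3 : 3 ≤ Δ := by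
    have h2 : (2:ℝ) < 1 / (1 - u) := by
      rw [lt_div_iff₀ h1u]; linarith
    have := Nat.lt_ceil.mpr (show ((2:ℕ):ℝ) < 1/(1-u) by exact_mod_cast h2)
    omega
  have hD3 : (3:ℝ) ≤ (Δ:ℝ) := by exact_mod_cast hΔ3
  have hDlb : 1 ≤ (Δ:ℝ) * (1 - u) := by
    have h := Nat.le_ceil (1/(1-u))
    rw [← hΔ] at h
    have h2 := mul_le_mul_of_nonneg_right h h1u.le
    rw [div_mul_cancel₀] at h2 <;> [linarith; positivity]
  have hDub : (Δ:ℝ) * (1 - u) < 2 - u := by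
    have h : ((Δ:ℕ):ℝ) < 1/(1-u) + 1 := by rw [hΔ]; exact Nat.ceil_lt_add_one (by positivity)
    have h2 := mul_lt_mul_of_pos_right h h1u
    rw [add_mul, div_mul_cancel₀] at h2 <;> [linarith; positivity]
  set y := x / u with hy
  have hy0 : 0 ≤ y := div_nonneg hx0 hu0.le
  have hy1 : y < 1 := (div_lt_one hu0).2 hxu
  have hxy : x = u * y := by rw [hy, mul_div_cancel₀ _ hu0.ne']
  set ind := (if u / 2 ≤ x then (1:ℝ) else 0) with hind
  have hind0 : 0 ≤ ind := by rw [hind]; split_ifs <;> norm_num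
  have hind1 : ind ≤ 1 := by rw [hind]; split_ifs <;> norm_num
  -- sum splitting
  have hins : Finset.Icc 2 (Δ-1) = insert 2 (Finset.Icc 3 (Δ-1)) := by
    ext i
    simp only [Finset.mem_Icc, Finset.mem_insert]
    omega
  have hsplit : ∀ f : ℕ → ℝ,
      ∑ i ∈ Finset.Icc 2 Δ, f i = (f 2 + ∑ i ∈ Finset.Icc 3 (Δ-1), f i) + f Δ := by
    intro f
    have h1 : Δ = (Δ-1)+1 := by omega
    rw [h1, Finset.sum_Icc_succ_top (by omega), ← h1, hins, Finset.sum_insert (by simp)]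
  -- nonnegativity of coefficients
  have hcD0 : 0 ≤ c Δ := by
    rw [hcΔ]
    have hq : 0 < u * ((Δ:ℝ) - 1) := by nlinarith
    rw [sub_nonneg, div_le_one hq]
    nlinarith
  have hS0 : 0 ≤ ∑ i ∈ Finset.Icc 2 Δ, c i * x ^ i := by
    refine Finset.sum_nonneg fun i hi => ?_
    rw [Finset.mem_Icc] at hi
    have hxi : 0 ≤ x ^ i := by positivity
    rcases eq_or_lt_of_le hi.2 with h | h
    · rw [h] at hxi ⊢
      exact mul_nonneg hcD0 hxi
    · have h2i : (2:ℝ) ≤ (i:ℝ) := by exact_mod_cast hi.1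
      rw [hc i hi.1 (by omega)]
      have hpos : (0:ℝ) < u * (i:ℝ) * ((i:ℝ) - 1) :=
        mul_pos (mul_pos hu0 (by linarith)) (by linarith)
      exact mul_nonneg (by positivity) hxi
  -- middle terms
  have hmid : ∀ i ∈ Finset.Icc 3 (Δ-1), c i * x ^ i ≤ y ^ i / ((i:ℝ) * ((i:ℝ) - 1)) := by
    intro i hi
    rw [Finset.mem_Icc] at hi
    have h3i : (3:ℝ) ≤ (i:ℝ) := by exact_mod_cast hi.1
    have hii : (0:ℝ) < (i:ℝ) * ((i:ℝ) - 1) := by nlinarith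
    have hui : u ^ i ≤ u := by
      calc u ^ i ≤ u ^ 1 := pow_le_pow_of_le_one hu0.le hu2.le (by omega)
        _ = u := pow_one u
    have hupos : (0:ℝ) < u ^ i := pow_pos hu0 i
    rw [hc i (by omega) hi.2, one_div_mul_eq_div, hy, div_pow, div_div]
    apply div_le_div_of_nonneg_left (by positivity) (by positivity)
    nlinarith
  -- top term
  have htop : c Δ * x ^ Δ ≤ y ^ Δ / ((Δ:ℝ) * ((Δ:ℝ) - 1)) := by
    have hyD : (0:ℝ) ≤ y ^ Δ := by positivity
    have hq : (0:ℝ) < u * ((Δ:ℝ) - 1) := by nlinarith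
    have hDD : (0:ℝ) < (Δ:ℝ) * ((Δ:ℝ) - 1) := by nlinarith
    have hcD : c Δ ≤ (1 - u) / (u * ((Δ:ℝ) - 1)) := by
      rw [hcΔ, sub_le_iff_le_add, ← add_div, le_div_iff₀ hq]
      nlinarith [hDlb]
    have hxD : x ^ Δ = u * u ^ (Δ - 1) * y ^ Δ := by
      rw [hxy, mul_pow]
      congr 1
      rw [← pow_succ']
      congr 1
      omega
    have hu2' : u ^ (Δ - 1) ≤ u ^ 2 := pow_le_pow_of_le_one hu0.le hu2.le (by omega)
    have hkey : (1 - u) * u ^ (Δ - 1) * (Δ:ℝ) ≤ 1 := by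
      have hp : (0:ℝ) < u ^ (Δ - 1) := pow_pos hu0 _
      have h1 : (1 - u) * u ^ (Δ - 1) * (Δ:ℝ) = u ^ (Δ - 1) * ((Δ:ℝ) * (1 - u)) := by ring
      have h2 : u ^ (Δ - 1) * ((Δ:ℝ) * (1 - u)) ≤ u ^ (Δ - 1) * (2 - u) :=
        mul_le_mul_of_nonneg_left hDub.le hp.le
      have h3 : u ^ (Δ - 1) * (2 - u) ≤ u ^ 2 * (2 - u) :=
        mul_le_mul_of_nonneg_right hu2' (by linarith)
      have h4 : u ^ 2 * (2 - u) ≤ 1 := by nlinarith [mul_pos h1u (mul_pos hu0 h1u)]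
      linarith
    calc c Δ * x ^ Δ ≤ (1 - u) / (u * ((Δ:ℝ) - 1)) * x ^ Δ :=
          mul_le_mul_of_nonneg_right hcD (by positivity)
      _ ≤ y ^ Δ / ((Δ:ℝ) * ((Δ:ℝ) - 1)) := by
          rw [hxD, div_mul_eq_mul_div, div_le_div_iff₀ hq hDD]
          have hmm := mul_le_mul_of_nonneg_right hkey
            (mul_nonneg hyD hq.le)
          nlinarith [hmm]
  -- the i = 2 gap
  have hA : ind / (8 * (Δ:ℝ)) ≤ x^2/(2*u^2) - x^2/(2*u) := by
    have hid : x^2/(2*u^2) - x^2/(2*u) = x^2*(1-u)/(2*u^2) := by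
      field_simp
    rw [hid, hind]
    split_ifs with h
    · have hx2 : u^2/4 ≤ x^2 := by nlinarith
      calc (1:ℝ)/(8*(Δ:ℝ)) ≤ (1-u)/8 := by
            rw [div_le_div_iff₀ (by positivity) (by norm_num)]
            nlinarith
        _ ≤ x^2*(1-u)/(2*u^2) := by
            rw [div_le_div_iff₀ (by norm_num) (by positivity)]
            nlinarith
    · simp only [zero_div]
      exact div_nonneg (mul_nonneg (by positivity) h1u.le) (by positivity)
  have e1 : c 2 * x ^ 2 = x^2/(2*u) := by
    rw [hc 2 le_rfl (by omega)]
    push_cast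
    norm_num
    ring
  have e2 : y ^ 2 / (((2:ℕ):ℝ) * (((2:ℕ):ℝ) - 1)) = x^2/(2*u^2) := by
    rw [hy, div_pow]
    push_cast
    norm_num
    rw [div_div]
    ring_nf
  -- key sum inequality
  have hkeysum : ∑ i ∈ Finset.Icc 2 Δ, c i * x ^ i + ind / (8*(Δ:ℝ))
      ≤ ∑ i ∈ Finset.Icc 2 Δ, y ^ i / ((i:ℝ) * ((i:ℝ) - 1)) := by
    rw [hsplit (fun i => c i * x ^ i), hsplit (fun i => y ^ i / ((i:ℝ) * ((i:ℝ) - 1)))]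
    have hm := Finset.sum_le_sum hmid
    linarith [hm, htop, hA, e1, e2]
  have hTle := partial_sum_le y hy0 hy1 Δ
  have hlog : Real.log (1 - y) ≤ 0 := Real.log_nonpos (by linarith) (by linarith)
  have hg0 : 0 < (1 - y) * (1 - Real.log (1 - y)) := by nlinarith
  have hQ : 0 ≤ ind / (8*(Δ:ℝ)) := div_nonneg hind0 (by positivity)
  have hid2 : (1-y)*(1 - Real.log (1-y)) = 1 - (y + (1-y)*Real.log (1-y)) := by ring
  have hgap : (1 - y) * (1 - Real.log (1 - y)) + ind/(8*(Δ:ℝ))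
      ≤ 1 - ∑ i ∈ Finset.Icc 2 Δ, c i * x ^ i := by
    linarith [hkeysum, hTle, hid2]
  have h1S : 0 < 1 - ∑ i ∈ Finset.Icc 2 Δ, c i * x ^ i := by linarith
  have hl2 : (0:ℝ) < Real.log 2 := Real.log_pos (by norm_num)
  have hden : (0:ℝ) < 8 * (1 + Real.log 2) * (Δ:ℝ) := by
    apply mul_pos (mul_pos (by norm_num) (by linarith)) (by linarith)
  have he0 : 0 ≤ ind / (8 * (1 + Real.log 2) * (Δ:ℝ)) := div_nonneg hind0 hden.le
  have hele : ind / (8 * (1 + Real.log 2) * (Δ:ℝ)) ≤ ind / (8 * (Δ:ℝ)) := by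
    apply div_le_div_of_nonneg_left hind0 (by positivity)
    nlinarith
  rw [div_le_div_iff₀ h1S hg0]
  nlinarith [mul_nonneg he0 hS0, hgap, hele, hS0]
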